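/- Let (X_m)_{m∈ℕ} be a family of topological spaces, each of which is a Noetherian topological space, together with continuous maps π_m : X_m → X_{m−1} for every m ≥ 1. Suppose given points x_{m,q} ∈ X_m for all m ∈ ℕ and q ∈ ℕ satisfying the compatibility π_m(x_{m,q}) = x_{m−1,q} for all m ≥ 1 and all q. Then there exist subsets Z_m ⊆ X_m for all m ∈ ℕ such that: each Z_m is closed and irreducible; (i) for every m the set { q ∈ ℕ | x_{m,q} ∈ Z_m } is infinite; (ii) for every m, Z_m equals the closure of { x_{m,q} | q ∈ ℕ, x_{m,q} ∈ Z_m }; and (iii) for every m ≥ 1, π_m(Z_m) ⊆ Z_{m−1} and the closure of π_m(Z_m) equals Z_{m−1} (i.e., the induced map Z_m → Z_{m−1} is dominant). -/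

import Mathlib

open TopologicalSpace

lemma exists_min_closed_infinite {α : Type*} [TopologicalSpace α] [NoetherianSpace α]
    (C : Set α) (hC : IsClosed C) (y : ℕ → α) (h : {q | y q ∈ C}.Infinite) :
    ∃ Z : Set α, Z ⊆ C ∧ IsClosed Z ∧ {q | y q ∈ Z}.Infinite ∧
      ∀ F, F ⊆ Z → IsClosed F → {q | y q ∈ F}.Infinite → F = Z := by
  have hwf : WellFounded fun s t : Closeds α => s < t := wellFounded_lt
  set S : Set (Closeds α) := {F | (F : Set α) ⊆ C ∧ {q | y q ∈ (F : Set α)}.Infinite} with hS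
  have hne : S.Nonempty := ⟨⟨C, hC⟩, subset_rfl, h⟩
  obtain ⟨Z, hZS, hmin⟩ := hwf.has_min S hne
  refine ⟨(Z : Set α), hZS.1, Z.isClosed, hZS.2, ?_⟩
  intro F hFZ hFcl hFinf
  have : (⟨F, hFcl⟩ : Closeds α) ∈ S := ⟨hFZ.trans hZS.1, hFinf⟩
  have hnot := hmin _ this
  have : ¬ (F ⊂ (Z : Set α)) := fun hss => hnot (by exact_mod_cast hss)
  exact ((ssubset_or_eq_of_subset hFZ).resolve_left this)

/-- The abstract generic-limit construction: given an inverse system of Noetherian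
topological spaces `X_m` with continuous transition maps `π_m : X_{m+1} → X_m`, and a
family of compatible points `x_{m,q}` (one for each stage `m` and each index `q`),
there are irreducible closed subsets `Z_m ⊆ X_m` such that (i) for every `m`
infinitely many `q` satisfy `x_{m,q} ∈ Z_m`; (ii) `Z_m` is the closure of the set of
those points `x_{m,q}` lying in `Z_m`; and (iii) `π_m` maps `Z_{m+1}` into `Z_m`
with dense image (the induced map is dominant). -/
theorem generic_limit_construction
    (X : ℕ → Type*) [∀ m, TopologicalSpace (X m)]
    [∀ m, TopologicalSpace.NoetherianSpace (X m)]
    (π : ∀ m, X (m + 1) → X m) (hπ : ∀ m, Continuous (π m))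
    (x : ∀ m, ℕ → X m) (hx : ∀ m q, π m (x (m + 1) q) = x m q) :
    ∃ Z : ∀ m, Set (X m),
      (∀ m, IsClosed (Z m) ∧ IsIrreducible (Z m)) ∧
      (∀ m, {q : ℕ | x m q ∈ Z m}.Infinite) ∧
      (∀ m, Z m = closure (x m '' {q : ℕ | x m q ∈ Z m})) ∧
      (∀ m, π m '' Z (m + 1) ⊆ Z m ∧ closure (π m '' Z (m + 1)) = Z m) := by
  classical
  let P : ∀ m, Set (X m) → Prop := fun m Z =>
    IsClosed Z ∧ {q | x m q ∈ Z}.Infinite ∧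
      ∀ F, F ⊆ Z → IsClosed F → {q | x m q ∈ F}.Infinite → F = Z
  have h0 : ∃ Z, P 0 Z := by
    obtain ⟨Z, _, h1, h2, h3⟩ := exists_min_closed_infinite (Set.univ : Set (X 0))
      isClosed_univ (x 0) (by simpa using Set.infinite_univ)
    exact ⟨Z, h1, h2, h3⟩
  have hstep : ∀ m (Z : Set (X m)), P m Z → ∃ W, P (m + 1) W ∧ W ⊆ π m ⁻¹' Z := by
    intro m Z hZ
    obtain ⟨W, hWsub, h1, h2, h3⟩ := exists_min_closed_infinite (π m ⁻¹' Z)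
      (hZ.1.preimage (hπ m)) (x (m + 1)) (by
        apply hZ.2.1.mono
        intro q hq
        simpa [hx m q] using hq)
    exact ⟨W, ⟨h1, h2, h3⟩, hWsub⟩
  let g : ∀ m, {Z : Set (X m) // P m Z} := fun m =>
    Nat.rec ⟨h0.choose, h0.choose_spec⟩
      (fun m prev => ⟨(hstep m prev.1 prev.2).choose, (hstep m prev.1 prev.2).choose_spec.1⟩) m
  have hsub : ∀ m, (g (m + 1)).1 ⊆ π m ⁻¹' (g m).1 :=
    fun m => (hstep m (g m).1 (g m).2).choose_spec.2
  refine ⟨fun m => (g m).1, ?_, fun m => (g m).2.2.1, ?_, ?_⟩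
  · intro m
    obtain ⟨hcl, hinf, hmin⟩ := (g m).2
    refine ⟨hcl, ?_, ?_⟩
    · obtain ⟨q, hq⟩ := hinf.nonempty
      exact ⟨x m q, hq⟩
    · rw [isPreirreducible_iff_isClosed_union_isClosed]
      intro A B hA hB hAB
      by_contra hcon
      push_neg at hcon
      have : {q | x m q ∈ (g m).1} ⊆ {q | x m q ∈ (g m).1 ∩ A} ∪ {q | x m q ∈ (g m).1 ∩ B} := by
        intro q hq
        rcases hAB hq with h | h
        · exact Or.inl ⟨hq, h⟩
        · exact Or.inr ⟨hq, h⟩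
      rcases Set.infinite_union.mp (hinf.mono this) with hIA | hIB
      · have := hmin _ Set.inter_subset_left (hcl.inter hA) hIA
        exact hcon.1 (fun z hz => by rw [← this] at hz; exact hz.2)
      · have := hmin _ Set.inter_subset_left (hcl.inter hB) hIB
        exact hcon.2 (fun z hz => by rw [← this] at hz; exact hz.2)
  · intro m
    obtain ⟨hcl, hinf, hmin⟩ := (g m).2
    have himg : x m '' {q | x m q ∈ (g m).1} ⊆ (g m).1 := by
      rintro _ ⟨q, hq, rfl⟩; exact hq
    refine (hmin _ (closure_minimal himg hcl) isClosed_closure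
      (hinf.mono ?_)).symm
    intro q hq
    exact subset_closure ⟨q, hq, rfl⟩
  · intro m
    have himg : π m '' (g (m + 1)).1 ⊆ (g m).1 := Set.image_subset_iff.2 (hsub m)
    obtain ⟨hcl, hinf, hmin⟩ := (g m).2
    refine ⟨himg, hmin _ (closure_minimal himg hcl) isClosed_closure ?_⟩
    apply (g (m + 1)).2.2.1.mono
    intro q hq
    have : x m q ∈ π m '' (g (m + 1)).1 := ⟨x (m + 1) q, hq, hx m q⟩
    exact subset_closure this
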